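/- Let $n \geq 2$, $r \geq 1$, and $0 \leq k_1 < k_2 < \ldots < k_r < n-1$. Let $s_i \in S_n$ denote the transposition $(i\ \ i+1)$ and let $I = \{s_1,\ldots,s_{n-1}\} \setminus \{s_{k_1+1},\ldots,s_{k_r+1}\}$. Suppose $\sigma \in S_n$ is $I$-reduced (i.e., $\ell(v\sigma) = \ell(v) + \ell(\sigma)$ for all $v$ in the parabolic subgroup generated by $I$) and satisfies $\sigma(\{1,\ldots,k_j\}) \subseteq \{1,\ldots,k_j+1\}$ for all $1 \leq j \leq r$. Then $\sigma$ can be uniquely written as $\sigma = w_1 w_2 \cdots w_r$ where for each $1 \leq i \leq r-1$, $w_i = s_{k_i+1} s_{k_i+2} \cdots s_{k_i+t_i}$ for some $0 \leq t_i \leq k_{i+1} - k_i$, and $w_r = s_{k_r+1} \cdots s_{k_r+t_r}$ for some $0 \leq t_r \leq n-1-k_r$. -/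

import Mathlib

/- Statement 1: unique factorization `σ = w₁ ⋯ w_r` of an `I`-reduced
permutation satisfying `σ({1,…,k_j}) ⊆ {1,…,k_j+1}`, with
`w_i = s_{k_i+1} s_{k_i+2} ⋯ s_{k_i+t_i}`.
Conventions: 1-based `s_j` is `simpleRefl n (j-1)`; `ℓ` is the inversion count,
which is the Coxeter length of `Sₙ`. -/

/-- The simple reflection `s_{i+1}` (1-based): swap of 0-based positions `i`, `i+1`. -/
def simpleRefl (n i : ℕ) : Equiv.Perm (Fin n) :=
  if h : i + 1 < n then Equiv.swap ⟨i, Nat.lt_of_succ_lt h⟩ ⟨i + 1, h⟩ else 1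

/-- The Coxeter length of a permutation of `Fin n`: its number of inversions. -/
def lenPerm {n : ℕ} (σ : Equiv.Perm (Fin n)) : ℕ :=
  (Finset.univ.filter fun p : Fin n × Fin n => p.1 < p.2 ∧ σ p.2 < σ p.1).card

namespace UF

/-- extension of a permutation of `Fin n` to `ℕ` by the identity. -/
def ext {n : ℕ} (σ : Equiv.Perm (Fin n)) : ℕ → ℕ :=
  fun x => if h : x < n then (σ ⟨x, h⟩).val else x

lemma ext_lt {n : ℕ} (σ : Equiv.Perm (Fin n)) {x : ℕ} (h : x < n) : ext σ x < n := by
  simp [ext, h]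

lemma ext_apply {n : ℕ} (σ : Equiv.Perm (Fin n)) (x : Fin n) : ext σ x.val = (σ x).val := by
  simp [ext, x.isLt]

lemma ext_mul {n : ℕ} (σ τ : Equiv.Perm (Fin n)) (x : ℕ) :
    ext (σ * τ) x = ext σ (ext τ x) := by
  by_cases h : x < n
  · simp [ext, h, ext_lt τ h, Equiv.Perm.mul_apply]
  · simp [ext, h]

lemma ext_inv_ext {n : ℕ} (σ : Equiv.Perm (Fin n)) (x : ℕ) :
    ext σ⁻¹ (ext σ x) = x := by
  by_cases h : x < n
  · simp [ext, h, ext_lt σ h]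
  · simp [ext, h]

lemma ext_ext_inv {n : ℕ} (σ : Equiv.Perm (Fin n)) (x : ℕ) :
    ext σ (ext σ⁻¹ x) = x := by
  have := ext_inv_ext σ⁻¹ x
  simpa using this

lemma ext_inj {n : ℕ} (σ : Equiv.Perm (Fin n)) {x y : ℕ} (h : ext σ x = ext σ y) : x = y := by
  have := congrArg (ext σ⁻¹) h
  rwa [ext_inv_ext, ext_inv_ext] at this

lemma ext_one {n : ℕ} (x : ℕ) : ext (1 : Equiv.Perm (Fin n)) x = x := by
  by_cases h : x < n <;> simp [ext, h]

lemma ext_simpleRefl {n u : ℕ} (hu : u + 1 < n) (x : ℕ) :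
    ext (simpleRefl n u) x = if x = u then u + 1 else if x = u + 1 then u else x := by
  by_cases h : x < n
  · simp only [ext, h, dif_pos, simpleRefl, dif_pos hu]
    rcases eq_or_ne x u with rfl | hxu
    · simp [Equiv.swap_apply_def]
    · rcases eq_or_ne x (u+1) with rfl | hxu1
      · simp [Equiv.swap_apply_def]
      · rw [Equiv.swap_apply_of_ne_of_ne (by simp [Fin.ext_iff, hxu]) (by simp [Fin.ext_iff, hxu1])]
        simp [hxu, hxu1]
  · have hxu : x ≠ u := by omega
    have hxu1 : x ≠ u + 1 := by omega
    simp [ext, h, hxu, hxu1]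

/-- block product `s_a s_{a+1} ⋯ s_{a+t-1}`. -/
lemma ext_block {n a t : ℕ} (h : a + t ≤ n - 1) (hn : 1 ≤ n) (x : ℕ) :
    ext (((List.range t).map fun j => simpleRefl n (a + j)).prod) x =
      if x < a then x else if x < a + t then x + 1 else if x = a + t then a else x := by
  induction t generalizing x with
  | zero => rw [show List.range 0 = [] from rfl]; simp only [List.map_nil, List.prod_nil, ext_one]; split_ifs <;> omega
  | succ t ih =>
      rw [List.range_succ, List.map_append, List.prod_append]
      simp only [List.map_cons, List.map_nil, List.prod_cons, List.prod_nil, mul_one]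
      rw [ext_mul]
      have hat : a + t + 1 < n := by omega
      rw [ext_simpleRefl hat]
      have ih' := fun y => ih (by omega) y
      by_cases h1 : x = a + t
      · rw [if_pos h1, ih']
        split_ifs <;> omega
      · rw [if_neg h1]
        by_cases h2 : x = a + t + 1
        · rw [if_pos h2, ih']
          split_ifs <;> omega
        · rw [if_neg h2, ih']
          split_ifs <;> omega



/-- The "missing value" after processing the first `i` intervals. -/
def Mval (K t : ℕ → ℕ) : ℕ → ℕ
  | 0 => K 0
  | i + 1 => if t i = K (i+1) - K i then Mval K t i else K (i+1)

/-- Clauses describing a permutation-function on the first `m` intervals. -/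
def PartCl (m : ℕ) (K t f : ℕ → ℕ) : Prop :=
  (∀ x, x < K 0 → f x = x) ∧
  (∀ i, i < m → ∀ j, j < t i → f (K i + j) = K i + j + 1) ∧
  (∀ i, i < m → t i < K (i+1) - K i → f (K i + t i) = Mval K t i) ∧
  (∀ i, i < m → ∀ x, K i + t i < x → x < K (i+1) → f x = x)

def Clauses (n r : ℕ) (K t f : ℕ → ℕ) : Prop :=
  PartCl r K t f ∧ f (n-1) = Mval K t r

lemma Kmono {K : ℕ → ℕ} {r : ℕ} (hSM : ∀ i j, i < j → j ≤ r → K i < K j)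
    {i j : ℕ} (hij : i ≤ j) (hj : j ≤ r) : K i ≤ K j := by
  rcases eq_or_lt_of_le hij with rfl | h
  · exact le_rfl
  · exact (hSM i j h hj).le

lemma find_interval {K : ℕ → ℕ} {x m : ℕ} (h0 : K 0 ≤ x) (hm : x < K m) :
    ∃ i, i < m ∧ K i ≤ x ∧ x < K (i+1) := by
  induction m with
  | zero => omega
  | succ m ih =>
      by_cases h : x < K m
      · obtain ⟨i, hi⟩ := ih h
        exact ⟨i, by omega, hi.2⟩
      · exact ⟨m, by omega, by omega, hm⟩

lemma Mval_congr {K t t' : ℕ → ℕ} {m : ℕ} (h : ∀ j, j < m → t j = t' j) :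
    Mval K t m = Mval K t' m := by
  induction m with
  | zero => rfl
  | succ m ih =>
      simp only [Mval, h m (by omega), ih (fun j hj => h j (by omega))]

lemma Mval_le {K t : ℕ → ℕ} {r m : ℕ} (hSM : ∀ i j, i < j → j ≤ r → K i < K j)
    (hm : m ≤ r) : Mval K t m ≤ K m := by
  induction m with
  | zero => exact le_rfl
  | succ m ih =>
      simp only [Mval]
      split_ifs
      · exact le_trans (ih (by omega)) (Kmono hSM (by omega) hm)
      · exact le_rfl

lemma Mval_char {K t : ℕ → ℕ} {m : ℕ} (hb : ∀ i, i < m → t i ≤ K (i+1) - K i) :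
    ∃ j, j ≤ m ∧ Mval K t m = K j ∧ (∀ l, j ≤ l → l < m → t l = K (l+1) - K l) ∧
      (j = 0 ∨ t (j-1) < K j - K (j-1)) := by
  induction m with
  | zero => exact ⟨0, le_rfl, rfl, by omega, Or.inl rfl⟩
  | succ m ih =>
      obtain ⟨j, hjm, hMj, hchain, hbd⟩ := ih (fun i hi => hb i (by omega))
      by_cases h : t m = K (m+1) - K m
      · refine ⟨j, by omega, by simp [Mval, h, hMj], ?_, hbd⟩
        intro l hl1 hl2
        rcases Nat.lt_or_ge l m with h' | h'
        · exact hchain l hl1 h'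
        · have : l = m := by omega
          subst this; exact h
      · refine ⟨m+1, le_rfl, by simp [Mval, h], by omega, Or.inr ?_⟩
        have := hb m (by omega)
        simp only [Nat.add_sub_cancel]
        omega

lemma img_lem {K t f : ℕ → ℕ} {r m : ℕ} (hSM : ∀ i j, i < j → j ≤ r → K i < K j)
    (hm : m ≤ r) (hb : ∀ i, i < m → t i ≤ K (i+1) - K i)
    (hcl : PartCl m K t f) : ∀ x, x < K m → f x ≤ K m ∧ f x ≠ Mval K t m := by
  obtain ⟨ha, hb', hc, hd⟩ := hcl
  obtain ⟨j, hjm, hMj, hchain, hbd⟩ := Mval_char (K := K) hb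
  intro x hx
  have hKj : K j ≤ K m := Kmono hSM hjm hm
  by_cases h0 : x < K 0
  · have hfx := ha x h0
    refine ⟨by omega, ?_⟩
    rw [hfx, hMj]
    have : K 0 ≤ K j := Kmono hSM (by omega) (by omega)
    omega
  · obtain ⟨i, him, hKi, hKi1⟩ := find_interval (by omega) hx
    have hKi1m : K (i+1) ≤ K m := Kmono hSM (by omega) hm
    by_cases h1 : x < K i + t i
    · -- climb
      have : f x = x + 1 := by
        have := hb' i him (x - K i) (by omega)
        have hxe : K i + (x - K i) = x := by omega
        rw [hxe] at this; omega
      rw [this, hMj]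
      constructor
      · have := hb i him; omega
      · intro hcon
        -- x + 1 = K j
        rcases Nat.lt_or_ge i j with hij | hij
        · -- i < j : forces t i = gap and i+1 = j, contradicting boundary
          have h2 : K (i+1) ≤ K j := Kmono hSM (by omega) (by omega)
          have h3 : t i ≤ K (i+1) - K i := hb i him
          -- x + 1 ≤ K i + t i ≤ K (i+1) ≤ K j = x + 1
          have h4 : K i + t i = K (i+1) := by omega
          have h5 : K (i+1) = K j := by omega
          have h6 : i + 1 = j := by
            by_contra hne
            have : i + 1 < j := by omega
            have := hSM (i+1) j this (by omega)
            omega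
          rcases hbd with h7 | h7
          · omega
          · rw [← h6] at h7
            simp only [Nat.add_sub_cancel] at h7
            omega
        · -- j ≤ i : i in chain, t i = gap, but x < K i + t i ≤ ... and x+1 = K j ≤ K i
          have : K j ≤ K i := Kmono hSM hij (by omega)
          omega
    · by_cases h2 : x = K i + t i
      · have hti : t i < K (i+1) - K i := by
          have := hb i him; omega
        have hfx := hc i him hti
        rw [h2, hfx]
        have hMi_le : Mval K t i ≤ K i := Mval_le hSM (by omega)
        refine ⟨by omega, ?_⟩
        obtain ⟨j', hj'i, hMj', hchain', hbd'⟩ :=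
          Mval_char (K := K) (m := i) (fun l hl => hb l (by omega))
        rw [hMj', hMj]
        intro hcon
        have hjj' : j = j' := by
          by_contra hne
          rcases Nat.lt_or_ge j j' with h' | h'
          · have := hSM j j' h' (by omega); omega
          · have := hSM j' j (by omega) (by omega); omega
        -- then i is in the chain of m (j ≤ i < m), so t i = gap, contradiction
        have := hchain i (by omega) him
        omega
      · -- fixed
        have hfx : f x = x := hd i him x (by omega) hKi1
        rw [hfx, hMj]
        constructor
        · omega
        · intro hcon
          -- x = K j with K i ≤ x < K(i+1): j ≤ i, so i in chain, t i = gap, contra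
          have hji : j ≤ i := by
            by_contra hne
            have : K (i+1) ≤ K j := Kmono hSM (by omega) (by omega)
            omega
          have := hchain i hji him
          have := hb i him
          omega

lemma eq_clauses {K t f f' : ℕ → ℕ} {n r : ℕ}
    (hKr : K r = n - 1)
    (hcl : Clauses n r K t f) (hcl' : Clauses n r K t f') :
    ∀ x, x < n → f x = f' x := by
  obtain ⟨⟨ha, hb, hc, hd⟩, he⟩ := hcl
  obtain ⟨⟨ha', hb', hc', hd'⟩, he'⟩ := hcl'
  intro x hx
  by_cases h0 : x < K 0
  · rw [ha x h0, ha' x h0]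
  · by_cases h1 : x = n - 1
    · rw [h1, he, he']
    · have hxr : x < K r := by omega
      obtain ⟨i, hir, hKi, hKi1⟩ := find_interval (by omega) hxr
      by_cases h2 : x < K i + t i
      · have e1 := hb i hir (x - K i) (by omega)
        have e2 := hb' i hir (x - K i) (by omega)
        have hxe : K i + (x - K i) = x := by omega
        rw [hxe] at e1 e2; omega
      · by_cases h3 : x = K i + t i
        · have hti : t i < K (i+1) - K i := by omega
          rw [h3, hc i hir hti, hc' i hir hti]
        · rw [hd i hir x (by omega) hKi1, hd' i hir x (by omega) hKi1]

lemma uniq_aux {K t t' f : ℕ → ℕ} {r : ℕ} (hSM : ∀ i j, i < j → j ≤ r → K i < K j)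
    (hbt : ∀ i, i < r → t i ≤ K (i+1) - K i)
    (hbt' : ∀ i, i < r → t' i ≤ K (i+1) - K i)
    (hcl : PartCl r K t f) (hcl' : PartCl r K t' f) :
    ∀ i, i < r → ¬ (t i < t' i) := by
  intro i hir hlt
  have hti : t i < K (i+1) - K i := lt_of_lt_of_le hlt (hbt' i hir)
  have e1 := hcl.2.2.1 i hir hti
  have e2 := hcl'.2.1 i hir (t i) hlt
  have := Mval_le (t := t) hSM (le_of_lt hir)
  omega

lemma uniq {K t t' f : ℕ → ℕ} {r : ℕ} (hSM : ∀ i j, i < j → j ≤ r → K i < K j)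
    (hbt : ∀ i, i < r → t i ≤ K (i+1) - K i)
    (hbt' : ∀ i, i < r → t' i ≤ K (i+1) - K i)
    (hcl : PartCl r K t f) (hcl' : PartCl r K t' f) :
    ∀ i, i < r → t i = t' i := by
  intro i hir
  have h1 := uniq_aux hSM hbt hbt' hcl hcl' i hir
  have h2 := uniq_aux hSM hbt' hbt hcl' hcl i hir
  omega



section key
variable {a b M : ℕ} {f g : ℕ → ℕ}

lemma finj (hfg : ∀ x, g (f x) = x) : ∀ x y, f x = f y → x = y := by
  intro x y h
  have := congrArg g h
  rwa [hfg, hfg] at this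

lemma low_img (hfg : ∀ x, g (f x) = x) (hM : M ≤ a)
    (h2 : ∀ x, x < a → f x ≤ a ∧ f x ≠ M) :
    ∀ v, v ≤ a → v ≠ M → ∃ y, y < a ∧ f y = v := by
  intro v hv hvM
  have hinj := finj hfg
  have hsub : (Finset.range a).image f ⊆ (Finset.range (a+1)).erase M := by
    intro w hw
    obtain ⟨y, hy, rfl⟩ := Finset.mem_image.mp hw
    have hy' := h2 y (Finset.mem_range.mp hy)
    exact Finset.mem_erase.mpr ⟨hy'.2, Finset.mem_range.mpr (by omega)⟩
  have hcard1 : ((Finset.range a).image f).card = a := by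
    rw [Finset.card_image_of_injOn (fun x _ y _ h => hinj x y h), Finset.card_range]
  have hcard2 : ((Finset.range (a+1)).erase M).card = a := by
    rw [Finset.card_erase_of_mem (Finset.mem_range.mpr (by omega)), Finset.card_range]
    omega
  have heq := Finset.eq_of_subset_of_card_le hsub (by omega)
  have hv' : v ∈ (Finset.range (a+1)).erase M :=
    Finset.mem_erase.mpr ⟨hvM, Finset.mem_range.mpr (by omega)⟩
  rw [← heq] at hv'
  obtain ⟨y, hy, hfy⟩ := Finset.mem_image.mp hv'
  exact ⟨y, Finset.mem_range.mp hy, hfy⟩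

lemma not_low (hfg : ∀ x, g (f x) = x) (hM : M ≤ a)
    (h2 : ∀ x, x < a → f x ≤ a ∧ f x ≠ M) :
    ∀ x, a ≤ x → f x ≤ a → f x = M := by
  intro x hx hfx
  by_contra h
  obtain ⟨y, hy, hfy⟩ := low_img hfg hM h2 (f x) hfx h
  have := finj hfg y x hfy
  omega

lemma key (hfg : ∀ x, g (f x) = x) (hgf : ∀ x, f (g x) = x)
    (hab : a < b) (hM : M ≤ a)
    (h2 : ∀ x, x < a → f x ≤ a ∧ f x ≠ M)
    (h3 : ∀ x, x < b → f x ≤ b)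
    (h4 : ∀ v, a < v → v < b → g v < g (v+1)) :
    ∃ c, c ≤ b - a ∧ (∀ x, a ≤ x → x < a + c → f x = x + 1) ∧
      (a + c < b → f (a + c) = M) ∧ (∀ x, a + c < x → x < b → f x = x) := by
  have hinj := finj hfg
  have hginj : ∀ x y, g x = g y → x = y := by
    intro x y h
    have := congrArg f h
    rwa [hgf, hgf] at this
  have hnl := not_low hfg hM h2
  -- positions of values above a are ≥ a
  have S1 : ∀ v, a < v → a ≤ g v := by
    intro v hv
    by_contra h
    have := (h2 (g v) (by omega)).1
    rw [hgf] at this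
    omega
  -- chain lower bound
  have gmono : ∀ d v, a < v → v + d ≤ b → g v ≤ g (v + d) := by
    intro d
    induction d with
    | zero => intro v _ _; simp
    | succ d ih =>
        intro v hv hvd
        have h1 := ih v hv (by omega)
        have h2' := h4 (v + d) (by omega) (by omega)
        have : v + (d+1) = v + d + 1 := by omega
        rw [this]
        omega
  have S2 : ∀ v, a < v → v ≤ b → v - 1 ≤ g v := by
    have aux : ∀ d, a + 1 + d ≤ b → a + d ≤ g (a + 1 + d) := by
      intro d
      induction d with
      | zero => intro _; simpa using S1 (a+1) (by omega)
      | succ d ih =>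
          intro hd
          have h1 := ih (by omega)
          have h2' := h4 (a + 1 + d) (by omega) (by omega)
          have : a + 1 + (d + 1) = (a + 1 + d) + 1 := by omega
          rw [this]
          omega
    intro v hv hvb
    have := aux (v - a - 1) (by omega)
    have e : a + 1 + (v - a - 1) = v := by omega
    rw [e] at this
    omega
  set p := g M with hp
  have hpa : a ≤ p := by
    by_contra h
    have := (h2 p (by omega)).2
    rw [hp, hgf] at this
    exact this rfl
  have hfp : f p = M := by rw [hp, hgf]
  by_cases hpb : b ≤ p
  · -- no M in the window: full climb
    have PH1 : g b < b := by
      by_contra hgb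
      push_neg at hgb
      have hmap : ∀ x ∈ Finset.Ico a b, f x ∈ Finset.Ioo a b := by
        intro x hx
        rw [Finset.mem_Ico] at hx
        have hfb := h3 x hx.2
        have hne : f x ≠ b := by
          intro h
          have : g (f x) = g b := by rw [h]
          rw [hfg] at this
          omega
        have hgt : a < f x := by
          by_contra h
          have hfM := hnl x hx.1 (by omega)
          have hx_eq : x = p := hinj x p (by rw [hfM, hfp])
          omega
        exact Finset.mem_Ioo.mpr ⟨hgt, by omega⟩
      have := Finset.card_le_card_of_injOn f hmap (fun x _ y _ h => hinj x y h)
      rw [Nat.card_Ico, Nat.card_Ioo] at this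
      omega
    have gv_eq : ∀ v, a < v → v ≤ b → g v = v - 1 := by
      have aux : ∀ d, d ≤ b - (a+1) → g (b - d) ≤ b - d - 1 := by
        intro d
        induction d with
        | zero =>
            intro _
            have := PH1
            simp only [Nat.sub_zero]
            omega
        | succ d ih =>
            intro hd
            have h1 := ih (by omega)
            have h2' := h4 (b - (d+1)) (by omega) (by omega)
            have e : b - (d+1) + 1 = b - d := by omega
            rw [e] at h2'
            omega
      intro v hv hvb
      have h1 := S2 v hv hvb
      have h2' := aux (b - v) (by omega)
      have e : b - (b - v) = v := by omega
      rw [e] at h2'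
      omega
    refine ⟨b - a, le_rfl, ?_, by omega, by omega⟩
    intro x hx hxb
    have hgx := gv_eq (x+1) (by omega) (by omega)
    have e : g (x + 1) = x := by omega
    have hfx : f (g (x+1)) = f x := by rw [e]
    rw [hgf] at hfx
    omega
  · -- M sits at position p < b
    push_neg at hpb
    have PH2 : ∀ v, a < v → v < b → g v < b := by
      intro v hv hvb
      by_contra hgv
      push_neg at hgv
      have hchain : ∀ w, v ≤ w → w ≤ b → b ≤ g w := by
        intro w hw hwb
        have := gmono (w - v) v hv (by omega)
        have e : v + (w - v) = w := by omega
        rw [e] at this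
        omega
      have hmap : ∀ x ∈ (Finset.Ico a b).erase p, f x ∈ Finset.Ioo a v := by
        intro x hx
        obtain ⟨hxp, hx'⟩ := Finset.mem_erase.mp hx
        rw [Finset.mem_Ico] at hx'
        have hfb := h3 x hx'.2
        have hgt : a < f x := by
          by_contra h
          have hfM := hnl x hx'.1 (by omega)
          have : x = p := by
            apply hinj
            rw [hfM, hfp]
          exact hxp this
        have hlt : f x < v := by
          by_contra h
          have := hchain (f x) (by omega) hfb
          rw [hfg] at this
          omega
        exact Finset.mem_Ioo.mpr ⟨hgt, hlt⟩
      have hcard := Finset.card_le_card_of_injOn f hmap (fun x _ y _ h => hinj x y h)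
      have hpmem : p ∈ Finset.Ico a b := Finset.mem_Ico.mpr ⟨hpa, hpb⟩
      rw [Finset.card_erase_of_mem hpmem, Nat.card_Ico, Nat.card_Ioo] at hcard
      omega
    have gup : ∀ v, a < v → v < b → g v ≤ v := by
      have aux : ∀ d, a < b - 1 - d → g (b - 1 - d) ≤ b - 1 - d := by
        intro d
        induction d with
        | zero =>
            intro hd
            have := PH2 (b-1) (by omega) (by omega)
            simp only [Nat.sub_zero]
            omega
        | succ d ih =>
            intro hd
            have h2' := h4 (b - 1 - (d+1)) (by omega) (by omega)
            have e : b - 1 - (d+1) + 1 = b - 1 - d := by omega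
            rw [e] at h2'
            have h1 := ih (by omega)
            omega
      intro v hv hvb
      have := aux (b - 1 - v) (by omega)
      have e : b - 1 - (b - 1 - v) = v := by omega
      rw [e] at this
      omega
    have pdown : ∀ d, d < p - a → g (p - d) = p - d - 1 := by
      intro d
      induction d with
      | zero =>
          intro hd
          have h1 := S2 p (by omega) (by omega)
          have h2' := gup p (by omega) hpb
          have hne : g p ≠ p := by
            intro h
            have : f (g p) = f p := by rw [h]
            rw [hgf, hfp] at this
            omega
          simp only [Nat.sub_zero]
          omega
      | succ d ih =>
          intro hd
          have hih := ih (by omega)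
          have h1 := S2 (p - (d+1)) (by omega) (by omega)
          have h2' := gup (p - (d+1)) (by omega) (by omega)
          have hne : g (p - (d+1)) ≠ p - (d+1) := by
            intro h
            have he : g (p - (d+1)) = g (p - d) := by
              rw [h, hih]; omega
            have := hginj _ _ he
            omega
          omega
    have pup : ∀ d, p + 1 + d < b → g (p + 1 + d) = p + 1 + d := by
      intro d
      induction d with
      | zero =>
          intro hd
          have h1 := S2 (p+1) (by omega) (by omega)
          have h2' := gup (p+1) (by omega) (by omega)
          have hne : g (p + 1) ≠ p := by
            intro h
            have he : g (p + 1) = g M := by rw [h, hp]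
            have := hginj _ _ he
            omega
          simp only [Nat.add_zero]
          omega
      | succ d ih =>
          intro hd
          have hih := ih (by omega)
          have h1 := S2 (p + 1 + (d+1)) (by omega) (by omega)
          have h2' := gup (p + 1 + (d+1)) (by omega) (by omega)
          have hne : g (p + 1 + (d+1)) ≠ p + 1 + d := by
            intro h
            have he : g (p + 1 + (d+1)) = g (p + 1 + d) := by rw [h, hih]
            have := hginj _ _ he
            omega
          omega
    refine ⟨p - a, by omega, ?_, ?_, ?_⟩
    · intro x hx hxp
      have hpd := pdown (p - x - 1) (by omega)
      have e : p - (p - x - 1) = x + 1 := by omega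
      rw [e] at hpd
      have e2 : g (x + 1) = x := by omega
      have : f (g (x+1)) = f x := by rw [e2]
      rw [hgf] at this
      omega
    · intro _
      have e : a + (p - a) = p := by omega
      rw [e, hfp]
    · intro x hx hxb
      have hpu := pup (x - p - 1) (by omega)
      have e : p + 1 + (x - p - 1) = x := by omega
      rw [e] at hpu
      have : f (g x) = f x := by rw [hpu]
      rw [hgf] at this
      omega

end key

section evalmain

lemma main {n r : ℕ} {K f g : ℕ → ℕ} (hn : 2 ≤ n) (hr : 1 ≤ r)
    (hfg : ∀ x, g (f x) = x) (hgf : ∀ x, f (g x) = x)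
    (hfn : ∀ x, x < n → f x < n)
    (hSM : ∀ i j, i < j → j ≤ r → K i < K j) (hKr : K r = n - 1)
    (hA : ∀ u, u < n - 1 → (∀ i, i < r → u ≠ K i) → g u < g (u+1))
    (hB : ∀ i, i ≤ r → ∀ x, x < K i → f x ≤ K i) :
    ∃ t : ℕ → ℕ, (∀ i, i < r → t i ≤ K (i+1) - K i) ∧ Clauses n r K t f := by
  have hK1 : ∀ i, i ≤ r → K i ≤ n - 1 := by
    intro i hi
    rw [← hKr]
    exact Kmono hSM hi le_rfl
  have aux : ∀ m, m ≤ r →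
      ∃ t : ℕ → ℕ, (∀ i, i < m → t i ≤ K (i+1) - K i) ∧ PartCl m K t f := by
    intro m
    induction m with
    | zero =>
        intro _
        refine ⟨fun _ => 0, by omega, ?_, by omega, by omega, by omega⟩
        -- ∀ x < K 0, f x = x
        intro x hx
        by_cases hK0 : K 0 = 0
        · omega
        · have hKr0 : K 0 ≤ n - 1 := hK1 0 (by omega)
          have h4 : ∀ v, 0 < v → v < K 0 → g v < g (v+1) := by
            intro v hv hvK
            refine hA v (by omega) ?_
            intro i hi h
            have := Kmono hSM (Nat.zero_le i) (le_of_lt hi)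
            omega
          obtain ⟨c, hc, cl1, cl2, cl3⟩ := key hfg hgf (show 0 < K 0 by omega)
            (le_refl 0) (by omega) (hB 0 (by omega)) h4
          have hc0 : c = 0 := by
            by_contra hcne
            have hf0 : f 0 = 1 := cl1 0 (le_refl 0) (by omega)
            have hg1 : g 1 = 0 := by rw [← hf0, hfg]
            have := hA 0 (by omega) (by
              intro i hi h
              have := Kmono hSM (Nat.zero_le i) (le_of_lt hi)
              omega)
            simp only [Nat.zero_add] at this
            omega
          subst hc0
          rcases Nat.eq_zero_or_pos x with rfl | hxpos
          · simpa using cl2 (by omega)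
          · exact cl3 x (by omega) hx
    | succ m ih =>
        intro hm1
        obtain ⟨t, hbt, hcl⟩ := ih (by omega)
        have hmr : m ≤ r := by omega
        have h2 := img_lem hSM hmr hbt hcl
        have hM := Mval_le (t := t) hSM hmr
        have hab : K m < K (m+1) := hSM m (m+1) (by omega) hm1
        have h4 : ∀ v, K m < v → v < K (m+1) → g v < g (v+1) := by
          intro v hv hvK
          have hv1 : v < n - 1 := by
            have := hK1 (m+1) hm1
            omega
          refine hA v hv1 ?_
          intro i hi h
          rcases Nat.lt_or_ge i (m+1) with h' | h'
          · have := Kmono hSM (show i ≤ m by omega) hmr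
            omega
          · have := Kmono hSM h' (by omega)
            omega
        obtain ⟨c, hc, cl1, cl2, cl3⟩ := key hfg hgf hab hM h2
          (hB (m+1) hm1) h4
        refine ⟨Function.update t m c, ?_, ?_⟩
        · intro i hi
          by_cases h : i = m
          · subst h; rw [Function.update_self]; omega
          · rw [Function.update_of_ne h]; exact hbt i (by omega)
        · obtain ⟨pa, pb, pc, pd⟩ := hcl
          have hMv : ∀ i, i ≤ m → Mval K (Function.update t m c) i = Mval K t i := by
            intro i hi
            apply Mval_congr
            intro j hj
            rw [Function.update_of_ne (show j ≠ m by omega)]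
          refine ⟨pa, ?_, ?_, ?_⟩
          · intro i hi j hj
            by_cases h : i = m
            · subst h
              rw [Function.update_self] at hj
              exact cl1 (K i + j) (by omega) (by omega)
            · rw [Function.update_of_ne h] at hj
              exact pb i (by omega) j hj
          · intro i hi hti
            by_cases h : i = m
            · subst h
              rw [Function.update_self] at hti ⊢
              rw [hMv i le_rfl]
              exact cl2 (by omega)
            · rw [Function.update_of_ne h] at hti ⊢
              rw [hMv i (by omega)]
              exact pc i (by omega) hti
          · intro i hi x hx1 hx2
            by_cases h : i = m
            · subst h
              rw [Function.update_self] at hx1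
              exact cl3 x hx1 hx2
            · rw [Function.update_of_ne h] at hx1
              exact pd i (by omega) x hx1 hx2
  obtain ⟨t, hbt, hcl⟩ := aux r le_rfl
  refine ⟨t, hbt, hcl, ?_⟩
  have h2 := img_lem hSM le_rfl hbt hcl
  have hMr := Mval_le (t := t) hSM (le_refl r)
  have hfn1 : f (n-1) ≤ n - 1 := by
    have := hfn (n-1) (by omega)
    omega
  by_contra hne
  obtain ⟨y, hy, hfy⟩ := low_img (a := n - 1) (M := Mval K t r) hfg (by omega)
    (by intro x hx; have := h2 x (by omega); omega) (f (n-1)) hfn1 hne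
  have := finj hfg y (n-1) hfy
  omega

lemma eval_all {n r : ℕ} {K tN : ℕ → ℕ} (k tF : Fin r → ℕ) (hn : 2 ≤ n)
    (hKk : ∀ (i : ℕ) (h : i < r), K i = k ⟨i, h⟩)
    (htk : ∀ (i : ℕ) (h : i < r), tN i = tF ⟨i, h⟩)
    (hSM : ∀ i j, i < j → j ≤ r → K i < K j) (hKr : K r = n - 1)
    (hb : ∀ i, i < r → tN i ≤ K (i+1) - K i) :
    Clauses n r K tN (ext ((List.ofFn fun i : Fin r =>
      ((List.range (tF i)).map fun j => simpleRefl n (k i + j)).prod).prod)) := by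
  have hK1 : ∀ i, i ≤ r → K i ≤ n - 1 := by
    intro i hi
    rw [← hKr]
    exact Kmono hSM hi le_rfl
  set L := (List.ofFn fun i : Fin r =>
      ((List.range (tF i)).map fun j => simpleRefl n (k i + j)).prod) with hL
  have aux : ∀ m, m ≤ r → PartCl m K tN (ext (L.take m).prod) ∧
      (∀ x, K m < x → ext (L.take m).prod x = x) ∧
      ext (L.take m).prod (K m) = Mval K tN m := by
    intro m
    induction m with
    | zero =>
        intro _
        refine ⟨⟨?_, by omega, by omega, by omega⟩, ?_, ?_⟩
        · intro x hx; simp [ext_one]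
        · intro x hx; simp [ext_one]
        · simp [ext_one, Mval]
    | succ m ih =>
        intro hm1
        obtain ⟨⟨pa, pb, pc, pd⟩, pe, pf⟩ := ih (by omega)
        have hmr : m < r := by omega
        have hstep : (L.take (m+1)).prod = (L.take m).prod *
            ((List.range (tF ⟨m, hmr⟩)).map fun j => simpleRefl n (k ⟨m, hmr⟩ + j)).prod := by
          rw [hL]
          rw [show (List.ofFn fun i : Fin r =>
              ((List.range (tF i)).map fun j => simpleRefl n (k i + j)).prod).take (m+1) =
            (List.ofFn fun i : Fin r =>
              ((List.range (tF i)).map fun j => simpleRefl n (k i + j)).prod).take m ++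
            [((List.range (tF ⟨m, hmr⟩)).map fun j => simpleRefl n (k ⟨m, hmr⟩ + j)).prod] from ?_]
          · rw [List.prod_append, List.prod_cons, List.prod_nil, mul_one]
          · rw [List.take_succ]
            congr 1
            rw [List.getElem?_eq_getElem (by simp [hmr])]
            simp [List.getElem_ofFn]
        have hab : K m < K (m+1) := hSM m (m+1) (by omega) hm1
        have hgap := hb m hmr
        have hbn : K (m+1) ≤ n - 1 := hK1 (m+1) hm1
        have hblock : ∀ x, ext (((List.range (tF ⟨m, hmr⟩)).map
            fun j => simpleRefl n (k ⟨m, hmr⟩ + j)).prod) x =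
            if x < K m then x else if x < K m + tN m then x + 1
            else if x = K m + tN m then K m else x := by
          intro x
          rw [← hKk m hmr, ← htk m hmr]
          exact ext_block (by omega) (by omega) x
        have heval : ∀ x, ext (L.take (m+1)).prod x =
            ext (L.take m).prod (if x < K m then x else if x < K m + tN m then x + 1
              else if x = K m + tN m then K m else x) := by
          intro x
          rw [hstep, ext_mul, hblock]
        constructor
        · refine ⟨?_, ?_, ?_, ?_⟩
          · -- x < K 0
            intro x hx
            have hK0m : K 0 ≤ K m := Kmono hSM (Nat.zero_le m) (by omega)
            rw [heval, if_pos (by omega)]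
            exact pa x hx
          · intro i hi j hj
            rcases Nat.lt_or_ge i m with him | him
            · have hKi1 : K (i+1) ≤ K m := Kmono hSM (by omega) (by omega)
              have := hb i (by omega)
              rw [heval, if_pos (by omega)]
              exact pb i him j hj
            · have hieq : i = m := by omega
              subst hieq
              rw [heval, if_neg (by omega), if_pos (by omega)]
              exact pe (K i + j + 1) (by omega)
          · intro i hi hti
            rcases Nat.lt_or_ge i m with him | him
            · have hKi1 : K (i+1) ≤ K m := Kmono hSM (by omega) (by omega)
              have := hb i (by omega)
              rw [heval, if_pos (by omega)]
              exact pc i him hti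
            · have hieq : i = m := by omega
              subst hieq
              rw [heval, if_neg (by omega), if_neg (by omega), if_pos rfl]
              exact pf
          · intro i hi x hx1 hx2
            rcases Nat.lt_or_ge i m with him | him
            · have hKi1 : K (i+1) ≤ K m := Kmono hSM (by omega) (by omega)
              have := hb i (by omega)
              rw [heval, if_pos (by omega)]
              exact pd i him x hx1 hx2
            · have hieq : i = m := by omega
              subst hieq
              rw [heval, if_neg (by omega), if_neg (by omega), if_neg (by omega)]
              exact pe x (by omega)
        constructor
        · intro x hx
          rw [heval, if_neg (by omega), if_neg (by omega), if_neg (by omega)]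
          exact pe x (by omega)
        · by_cases htm : tN m = K (m+1) - K m
          · have he : K (m+1) = K m + tN m := by omega
            rw [heval, if_neg (by omega), if_neg (by omega), if_pos he]
            rw [pf]
            simp [Mval, htm]
          · have hlt : K m + tN m < K (m+1) := by omega
            rw [heval, if_neg (by omega), if_neg (by omega), if_neg (by omega)]
            rw [pe (K (m+1)) (by omega)]
            simp [Mval, htm]
  obtain ⟨hcl, _, hf⟩ := aux r le_rfl
  have hLr : L.take r = L := by
    apply List.take_of_length_le
    simp [hL]
  rw [hLr] at hcl hf
  refine ⟨hcl, ?_⟩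
  rw [← hKr]
  exact hf

end evalmain

section assemble

lemma partcl_congr {K t t' f : ℕ → ℕ} {m : ℕ} (h : ∀ j, j < m → t j = t' j) :
    PartCl m K t f → PartCl m K t' f := by
  rintro ⟨pa, pb, pc, pd⟩
  refine ⟨pa, ?_, ?_, ?_⟩
  · intro i hi j hj
    rw [← h i hi] at hj
    exact pb i hi j hj
  · intro i hi hti
    rw [← h i hi] at hti ⊢
    rw [← Mval_congr (fun j hj => h j (by omega))]
    exact pc i hi hti
  · intro i hi x hx1 hx2
    rw [← h i hi] at hx1
    exact pd i hi x hx1 hx2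

lemma clauses_congr {n r : ℕ} {K t t' f : ℕ → ℕ} (h : ∀ j, j < r → t j = t' j) :
    Clauses n r K t f → Clauses n r K t' f := by
  rintro ⟨hp, hm⟩
  refine ⟨partcl_congr h hp, ?_⟩
  rw [← Mval_congr h]
  exact hm

lemma len_lemma {n u : ℕ} (hu : u + 1 < n) (σ : Equiv.Perm (Fin n))
    (h : lenPerm (simpleRefl n u * σ) = lenPerm (simpleRefl n u) + lenPerm σ) :
    (σ⁻¹ ⟨u, Nat.lt_of_succ_lt hu⟩ : Fin n) < σ⁻¹ ⟨u+1, hu⟩ := by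
  by_contra hcon
  set i1 : Fin n := σ⁻¹ ⟨u, Nat.lt_of_succ_lt hu⟩ with hi1
  set i2 : Fin n := σ⁻¹ ⟨u+1, hu⟩ with hi2
  have hs1 : σ i1 = ⟨u, Nat.lt_of_succ_lt hu⟩ := Equiv.apply_symm_apply σ _
  have hs2 : σ i2 = ⟨u+1, hu⟩ := Equiv.apply_symm_apply σ _
  have hne : i2 ≠ i1 := by
    intro hh
    rw [hh, hs1] at hs2
    have := congrArg Fin.val hs2
    simp at this
  have h21 : i2 < i1 := by
    rcases lt_trichotomy i1 i2 with h' | h' | h'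
    · exact absurd h' hcon
    · exact absurd h'.symm hne
    · exact h'
  have hval : ∀ x : Fin n, ((simpleRefl n u) x).val =
      if x.val = u then u + 1 else if x.val = u + 1 then u else x.val := by
    intro x
    rw [← ext_apply, ext_simpleRefl hu]
  -- length of the simple reflection is positive
  have hlen1 : 1 ≤ lenPerm (simpleRefl n u) := by
    unfold lenPerm
    rw [Finset.one_le_card]
    refine ⟨((⟨u, Nat.lt_of_succ_lt hu⟩ : Fin n), (⟨u+1, hu⟩ : Fin n)), ?_⟩
    rw [Finset.mem_filter]
    refine ⟨Finset.mem_univ _, ?_, ?_⟩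
    · simp [Fin.lt_def]
    · rw [Fin.lt_def, hval, hval]
      simp
  -- the pair (i2, i1) is an inversion of σ
  have hmem : (i2, i1) ∈ Finset.univ.filter
      (fun p : Fin n × Fin n => p.1 < p.2 ∧ σ p.2 < σ p.1) := by
    rw [Finset.mem_filter]
    refine ⟨Finset.mem_univ _, h21, ?_⟩
    rw [hs1, hs2, Fin.lt_def]
    simp
  -- inversions of s * σ are contained in those of σ minus (i2, i1)
  have hsub : Finset.univ.filter
      (fun p : Fin n × Fin n => p.1 < p.2 ∧ (simpleRefl n u * σ) p.2 < (simpleRefl n u * σ) p.1)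
      ⊆ (Finset.univ.filter
        (fun p : Fin n × Fin n => p.1 < p.2 ∧ σ p.2 < σ p.1)).erase (i2, i1) := by
    intro p hp
    rw [Finset.mem_filter] at hp
    obtain ⟨-, hp12, hps⟩ := hp
    rw [Fin.lt_def] at hps
    simp only [Equiv.Perm.mul_apply] at hps
    rw [hval, hval] at hps
    have hABne : (σ p.1).val ≠ (σ p.2).val := by
      intro hh
      have := σ.injective (Fin.ext hh)
      rw [this] at hp12
      exact lt_irrefl _ hp12
    have hnotcase : ¬ ((σ p.1).val = u ∧ (σ p.2).val = u + 1) := by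
      rintro ⟨hA, hB⟩
      have e1 : p.1 = i1 := by
        apply σ.injective
        rw [hs1]
        exact Fin.ext hA
      have e2 : p.2 = i2 := by
        apply σ.injective
        rw [hs2]
        exact Fin.ext hB
      rw [e1, e2, Fin.lt_def] at hp12
      rw [Fin.lt_def] at h21
      omega
    have hBA : (σ p.2).val < (σ p.1).val := by
      split_ifs at hps <;> omega
    rw [Finset.mem_erase]
    constructor
    · intro hh
      have e1 : p.1 = i2 := congrArg Prod.fst hh
      have e2 : p.2 = i1 := congrArg Prod.snd hh
      rw [e1, e2, hs1, hs2] at hps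
      simp at hps
    · rw [Finset.mem_filter]
      exact ⟨Finset.mem_univ _, hp12, Fin.lt_def.mpr hBA⟩
  have hcard : lenPerm (simpleRefl n u * σ) < lenPerm σ := by
    have h1 := Finset.card_le_card hsub
    rw [Finset.card_erase_of_mem hmem] at h1
    have h2 : 0 < (Finset.univ.filter
        (fun p : Fin n × Fin n => p.1 < p.2 ∧ σ p.2 < σ p.1)).card :=
      Finset.card_pos.mpr ⟨_, hmem⟩
    unfold lenPerm
    omega
  omega


end assemble

end UF

theorem unique_factorization_I_reduced (n r : ℕ) (hn : 2 ≤ n) (hr : 1 ≤ r)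
    (k : Fin r → ℕ) (hmono : StrictMono k) (hk : ∀ i, k i < n - 1)
    (σ : Equiv.Perm (Fin n))
    (hred : ∀ v ∈ Subgroup.closure
        {p : Equiv.Perm (Fin n) | ∃ j : ℕ, 1 ≤ j ∧ j ≤ n - 1 ∧
          (∀ i : Fin r, j ≠ k i + 1) ∧ p = simpleRefl n (j - 1)},
      lenPerm (v * σ) = lenPerm v + lenPerm σ)
    (himg : ∀ (j : Fin r) (x : Fin n), x.val < k j → (σ x).val < k j + 1) :
    ∃! t : Fin r → ℕ,
      (∀ (i : Fin r) (h : i.val + 1 < r), t i ≤ k ⟨i.val + 1, h⟩ - k i) ∧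
      (∀ i : Fin r, i.val + 1 = r → t i ≤ n - 1 - k i) ∧
      σ = (List.ofFn fun i : Fin r =>
        ((List.range (t i)).map fun j => simpleRefl n (k i + j)).prod).prod := by
  classical
  set K : ℕ → ℕ := fun i => if h : i < r then (k ⟨i, h⟩ : ℕ) else n - 1 with hK
  have hKlt : ∀ (i : ℕ) (h : i < r), K i = k ⟨i, h⟩ := by
    intro i h; simp [hK, h]
  have hKr : K r = n - 1 := by simp [hK]
  have hSM : ∀ i j, i < j → j ≤ r → K i < K j := by
    intro i j hij hjr
    have hir : i < r := by omega
    rcases eq_or_lt_of_le hjr with rfl | hjr'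
    · rw [hKlt i hir, hKr]; exact hk _
    · rw [hKlt i hir, hKlt j hjr']
      exact hmono (show (⟨i, hir⟩ : Fin r) < ⟨j, hjr'⟩ from hij)
  have hfg : ∀ x, UF.ext σ⁻¹ (UF.ext σ x) = x := UF.ext_inv_ext σ
  have hgf : ∀ x, UF.ext σ (UF.ext σ⁻¹ x) = x := UF.ext_ext_inv σ
  have hfn : ∀ x, x < n → UF.ext σ x < n := fun x hx => UF.ext_lt σ hx
  have hA : ∀ u, u < n - 1 → (∀ i, i < r → u ≠ K i) →
      UF.ext σ⁻¹ u < UF.ext σ⁻¹ (u+1) := by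
    intro u hun hne
    have hu1 : u + 1 < n := by omega
    have hmem : simpleRefl n u ∈ Subgroup.closure
        {p : Equiv.Perm (Fin n) | ∃ j : ℕ, 1 ≤ j ∧ j ≤ n - 1 ∧
          (∀ i : Fin r, j ≠ k i + 1) ∧ p = simpleRefl n (j - 1)} := by
      apply Subgroup.subset_closure
      refine ⟨u + 1, by omega, by omega, ?_, by simp⟩
      intro i
      have := hne i.val i.isLt
      rw [hKlt i.val i.isLt, Fin.eta] at this
      omega
    have hlen := hred _ hmem
    have hlt := UF.len_lemma hu1 σ hlen
    rw [Fin.lt_def] at hlt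
    have e1 : UF.ext σ⁻¹ u = (σ⁻¹ ⟨u, Nat.lt_of_succ_lt hu1⟩ : Fin n).val := by
      unfold UF.ext
      rw [dif_pos (Nat.lt_of_succ_lt hu1)]
    have e2 : UF.ext σ⁻¹ (u + 1) = (σ⁻¹ ⟨u + 1, hu1⟩ : Fin n).val := by
      unfold UF.ext
      rw [dif_pos hu1]
    rw [e1, e2]
    exact hlt
  have hB : ∀ i, i ≤ r → ∀ x, x < K i → UF.ext σ x ≤ K i := by
    intro i hir x hx
    rcases eq_or_lt_of_le hir with rfl | hir'
    · rw [hKr] at hx ⊢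
      have := UF.ext_lt σ (show x < n by omega)
      omega
    · rw [hKlt i hir'] at hx ⊢
      have hxn : x < n := by
        have := hk (⟨i, hir'⟩ : Fin r)
        omega
      have himx := himg ⟨i, hir'⟩ ⟨x, hxn⟩ hx
      have e : UF.ext σ x = (σ ⟨x, hxn⟩).val := by
        unfold UF.ext
        rw [dif_pos hxn]
      omega
  obtain ⟨t0, hbt0, hcl0⟩ := UF.main hn hr hfg hgf hfn hSM hKr hA hB
  set tF : Fin r → ℕ := fun i => t0 i.val with htF
  have htk : ∀ (i : ℕ) (h : i < r), t0 i = tF ⟨i, h⟩ := fun i h => rfl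
  have hclE := UF.eval_all (K := K) (tN := t0) k tF hn hKlt htk hSM hKr hbt0
  have hfeq := UF.eq_clauses hKr hcl0 hclE
  have hσE : σ = (List.ofFn fun i : Fin r =>
      ((List.range (tF i)).map fun j => simpleRefl n (k i + j)).prod).prod := by
    apply Equiv.ext
    intro y
    apply Fin.ext
    have hy := hfeq y.val y.isLt
    rw [UF.ext_apply, UF.ext_apply] at hy
    exact hy
  refine ⟨tF, ⟨?_, ?_, hσE⟩, ?_⟩
  · intro i h
    have := hbt0 i.val i.isLt
    rw [hKlt (i.val + 1) h, hKlt i.val i.isLt, Fin.eta] at this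
    exact this
  · intro i h
    have := hbt0 i.val i.isLt
    rw [h, hKr, hKlt i.val i.isLt, Fin.eta] at this
    exact this
  · rintro t' ⟨hb1, hb2, hprod⟩
    funext i
    set t'U : ℕ → ℕ := fun j => if h : j < r then t' ⟨j, h⟩ else 0 with ht'U
    have htk' : ∀ (j : ℕ) (h : j < r), t'U j = t' ⟨j, h⟩ := by
      intro j h; simp [ht'U, h]
    have hbt' : ∀ j, j < r → t'U j ≤ K (j+1) - K j := by
      intro j hj
      rw [htk' j hj]
      by_cases hj1 : j + 1 < r
      · rw [hKlt (j+1) hj1, hKlt j hj]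
        exact hb1 ⟨j, hj⟩ hj1
      · have hj1' : j + 1 = r := by omega
        rw [hj1', hKr, hKlt j hj]
        exact hb2 ⟨j, hj⟩ hj1'
    have hclE' := UF.eval_all (K := K) (tN := t'U) k t' hn hKlt htk' hSM hKr hbt'
    rw [← hprod] at hclE'
    have huniq := UF.uniq hSM hbt0 hbt' hcl0.1 hclE'.1
    have h1 := huniq i.val i.isLt
    rw [htk' i.val i.isLt, Fin.eta] at h1
    exact h1.symm
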